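/- For every z ∈ F^n and every μ ∈ F, the radius-1 neighborhood of the coset R_δ + z equals the radius-1 neighborhood of R_δ + z + μ·e^{(δ)}, where e^{(δ)} is the standard basis vector of F^n with a 1 at coordinate δ. -/

import Mathlib

variable {F : Type*} [Field F] [Fintype F] [DecidableEq F] {m : ℕ}

def IsProj (α : Fin m → F) : Prop :=
  ∃ i, α i = 1 ∧ ∀ j < i, α j = 0

instance : DecidablePred (IsProj (F := F) (m := m)) :=
  fun α => decidable_of_iff (∃ i, α i = 1 ∧ ∀ j < i, α j = 0) Iff.rfl

/-- The projective points: nonzero vectors with first nonzero coordinate 1. -/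
abbrev PA (F : Type*) [Field F] [Fintype F] [DecidableEq F] (m : ℕ) : Type _ :=
  {α : Fin m → F // IsProj α}

/-- The Hamming code of length (q^m-1)/(q-1). -/
def Hcode (F : Type*) [Field F] [Fintype F] [DecidableEq F] (m : ℕ) : Set (PA F m → F) :=
  {c | ∑ α : PA F m, c α • (α : Fin m → F) = 0}

/-- Zero-extension of a vector of F^m to a word indexed by PA F m. -/
def bar (α : Fin m → F) : PA F m → F :=
  fun β => ∑ i, if (β : Fin m → F) = Pi.single i 1 then α i else 0

/-- The linear δ-component: span of the weight-3 codewords with value 1 at δ. -/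
def Rcomp (δ : PA F m) : Submodule F (PA F m → F) :=
  Submodule.span F {c | c ∈ Hcode F m ∧ hammingNorm c = 3 ∧ c δ = 1}

/-- A 1-perfect code: radius-1 balls around codewords partition the space. -/
def IsPerfect {ι : Type*} [Fintype ι] (P : Set (ι → F)) : Prop :=
  ∀ z : ι → F, ∃! c, c ∈ P ∧ hammingDist z c ≤ 1

/-- A 1-code: radius-1 balls around codewords are pairwise disjoint. -/
def IsOneCode {ι : Type*} [Fintype ι] (C : Set (ι → F)) : Prop :=
  ∀ x ∈ C, ∀ y ∈ C, x ≠ y → ∀ z, ¬(hammingDist x z ≤ 1 ∧ hammingDist y z ≤ 1)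

/-- The radius-1 neighborhood of a set of words. -/
def nbhd {ι : Type*} [Fintype ι] (M : Set (ι → F)) : Set (ι → F) :=
  {y | ∃ x ∈ M, hammingDist x y ≤ 1}

/-- The projective point corresponding to the standard basis vector π^(i). -/
def singleProj (i : Fin m) : PA F m :=
  ⟨Pi.single i 1, i, by simp, fun j hj => Pi.single_eq_of_ne (Fin.ne_of_lt hj) 1⟩

/-- The projective point (1, x). -/
def consProj {s : ℕ} (x : Fin s → F) : PA F (s+1) :=
  ⟨Fin.cons 1 x, 0, by simp, fun j hj => absurd hj (by simp)⟩


/-- Proportional projective points are equal. -/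
lemma proj_eq_of_smul {α β : PA F m} {c : F}
    (h : (α : Fin m → F) = c • (β : Fin m → F)) : α = β := by
  obtain ⟨i, hi1, hi0⟩ := β.2
  obtain ⟨j, hj1, hj0⟩ := α.2
  have hji : j = i := by
    rcases lt_trichotomy j i with hlt | heq | hgt
    · have := congrFun h j
      rw [hj1, Pi.smul_apply, hi0 j hlt, smul_zero] at this
      exact absurd this one_ne_zero
    · exact heq
    · have hc : c = 0 := by
        have := congrFun h i
        rw [hj0 i hgt, Pi.smul_apply, hi1, smul_eq_mul, mul_one] at this
        exact this.symm
      have := congrFun h j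
      rw [hj1, hc, Pi.smul_apply, zero_smul] at this
      exact absurd this one_ne_zero
  have hc1 : c = 1 := by
    have := congrFun h j
    rw [hj1, hji, Pi.smul_apply, hi1, smul_eq_mul, mul_one] at this
    exact this.symm
  refine Subtype.ext ?_
  rw [h, hc1, one_smul]

/-- Every nonzero vector is a nonzero multiple of a projective point. -/
lemma exists_normalize (v : Fin m → F) (hv : v ≠ 0) :
    ∃ (s : F) (β : PA F m), s ≠ 0 ∧ v = s • (β : Fin m → F) := by
  have hne : (Finset.univ.filter (fun i => v i ≠ 0)).Nonempty := by
    rw [Finset.filter_nonempty_iff]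
    by_contra h
    push_neg at h
    exact hv (funext fun i => h i (Finset.mem_univ i))
  set i₀ := (Finset.univ.filter (fun i => v i ≠ 0)).min' hne with hi₀
  have hmem := Finset.min'_mem _ hne
  rw [Finset.mem_filter] at hmem
  have hs : v i₀ ≠ 0 := hmem.2
  refine ⟨v i₀, ⟨(v i₀)⁻¹ • v, i₀, by simp [inv_mul_cancel₀ hs], fun j hj => ?_⟩, hs, ?_⟩
  · have hj0 : v j = 0 := by
      by_contra h
      have : i₀ ≤ j := Finset.min'_le _ _ (Finset.mem_filter.2 ⟨Finset.mem_univ j, h⟩)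
      exact absurd hj (not_lt.2 this)
    simp [hj0]
  · funext j
    simp only [Pi.smul_apply, smul_eq_mul]
    rw [← mul_assoc, mul_inv_cancel₀ hs, one_mul]

/-- Existence of a weight-3 codeword in the δ-component with prescribed value at γ. -/
lemma weight3 (δ γ : PA F m) (hne : δ ≠ γ) (t : F) (ht : t ≠ 0) :
    ∃ c ∈ Rcomp δ, ∃ β : PA F m, β ≠ δ ∧ β ≠ γ ∧ c δ = 1 ∧ c γ = t ∧
      ∀ α : PA F m, α ≠ δ → α ≠ γ → α ≠ β → c α = 0 := by
  set v : Fin m → F := (δ : Fin m → F) + t • (γ : Fin m → F) with hv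
  have hv0 : v ≠ 0 := by
    intro h
    have : (δ : Fin m → F) = (-t) • (γ : Fin m → F) := by
      funext j
      have := congrFun h j
      simp only [hv, Pi.add_apply, Pi.smul_apply, Pi.zero_apply, smul_eq_mul,
        neg_mul, neg_smul, Pi.neg_apply] at this ⊢
      linear_combination this
    exact hne (proj_eq_of_smul this)
  obtain ⟨s, β, hs, hvs⟩ := exists_normalize v hv0
  have hβδ : β ≠ δ := by
    intro h
    subst h
    have : (γ : Fin m → F) = (t⁻¹ * (s - 1)) • (β : Fin m → F) := by
      funext j
      have := congrFun hvs j
      simp only [hv, Pi.add_apply, Pi.smul_apply, smul_eq_mul] at this ⊢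
      field_simp
      linear_combination this
    exact hne ((proj_eq_of_smul this).symm) |>.elim
  have hβγ : β ≠ γ := by
    intro h
    subst h
    have : (δ : Fin m → F) = (s - t) • (β : Fin m → F) := by
      funext j
      have := congrFun hvs j
      simp only [hv, Pi.add_apply, Pi.smul_apply, smul_eq_mul] at this ⊢
      linear_combination this
    exact hne (proj_eq_of_smul this)
  classical
  set c : PA F m → F :=
    fun α => if α = δ then 1 else if α = γ then t else if α = β then -s else 0 with hc
  have hcδ : c δ = 1 := by simp [hc]
  have hcγ : c γ = t := by simp [hc, hne.symm]
  have hcβ : c β = -s := by simp [hc, hβδ, hβγ]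
  have hczero : ∀ α : PA F m, α ≠ δ → α ≠ γ → α ≠ β → c α = 0 := by
    intro α h1 h2 h3; simp [hc, h1, h2, h3]
  have hsum : ∑ α : PA F m, c α • (α : Fin m → F) = 0 := by
    have hsubset : ({δ, γ, β} : Finset (PA F m)) ⊆ Finset.univ := Finset.subset_univ _
    rw [← Finset.sum_subset hsubset (by
      intro α _ hα
      simp only [Finset.mem_insert, Finset.mem_singleton] at hα
      push_neg at hα
      rw [hczero α hα.1 hα.2.1 hα.2.2, zero_smul])]
    rw [Finset.sum_insert (by simp [hne, hβδ.symm]),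
      Finset.sum_insert (by simp [hβγ.symm]), Finset.sum_singleton]
    rw [hcδ, hcγ, hcβ, one_smul]
    funext j
    have := congrFun hvs j
    simp only [hv, Pi.add_apply, Pi.smul_apply, Pi.zero_apply, smul_eq_mul, neg_mul,
      Pi.neg_apply] at this ⊢
    linear_combination this
  have hnorm : hammingNorm c = 3 := by
    have hfilt : ({i | c i ≠ 0} : Finset (PA F m)) = {δ, γ, β} := by
      ext α
      simp only [Finset.mem_filter, Finset.mem_univ, true_and, Finset.mem_insert,
        Finset.mem_singleton]
      constructor
      · intro hα
        by_contra h
        push_neg at h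
        exact hα (hczero α h.1 h.2.1 h.2.2)
      · rintro (rfl | rfl | rfl)
        · rw [hcδ]; exact one_ne_zero
        · rw [hcγ]; exact ht
        · rw [hcβ]; exact neg_ne_zero.2 hs
    rw [hammingNorm, hfilt]
    rw [Finset.card_insert_of_notMem (by simp [hne, hβδ.symm]),
      Finset.card_insert_of_notMem (by simp [hβγ.symm]), Finset.card_singleton]
  exact ⟨c, Submodule.subset_span ⟨hsum, hnorm, hcδ⟩, β, hβδ, hβγ, hcδ, hcγ, hczero⟩

lemma norm_le_one_of (f : PA F m → F) (β : PA F m) (h : ∀ α, α ≠ β → f α = 0) :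
    hammingNorm f ≤ 1 := by
  rw [hammingNorm]
  calc ({i | f i ≠ 0} : Finset (PA F m)).card ≤ ({β} : Finset (PA F m)).card := by
        apply Finset.card_le_card
        intro α hα
        simp only [Finset.mem_filter, Finset.mem_univ, true_and] at hα
        simp only [Finset.mem_singleton]
        by_contra hne
        exact hα (h α hne)
    _ = 1 := Finset.card_singleton β

lemma norm_le_one_iff (f : PA F m → F) (h : hammingNorm f ≤ 1) :
    f = 0 ∨ ∃ γ, f γ ≠ 0 ∧ ∀ α, α ≠ γ → f α = 0 := by
  by_cases h0 : f = 0
  · exact Or.inl h0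
  · right
    have : hammingNorm f = 1 := le_antisymm h (Nat.one_le_iff_ne_zero.2
      (hammingNorm_ne_zero_iff.2 h0))
    rw [hammingNorm, Finset.card_eq_one] at this
    obtain ⟨γ, hγ⟩ := this
    refine ⟨γ, ?_, ?_⟩
    · have : γ ∈ ({i | f i ≠ 0} : Finset (PA F m)) := hγ ▸ Finset.mem_singleton_self γ
      simpa using this
    · intro α hα
      by_contra hfa
      have : α ∈ ({i | f i ≠ 0} : Finset (PA F m)) := by simpa using hfa
      rw [hγ, Finset.mem_singleton] at this
      exact hα this

lemma nbhd_incl (δ : PA F m) (z : PA F m → F) (μ : F) :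
    nbhd ((· + (z + Pi.single δ μ)) '' (Rcomp δ : Set (PA F m → F))) ⊆
      nbhd ((· + z) '' (Rcomp δ : Set (PA F m → F))) := by
  rintro y ⟨w, ⟨x, hx, rfl⟩, hd⟩
  set u : PA F m → F := y - (x + z + Pi.single δ μ) with hu
  have hun : hammingNorm u ≤ 1 := by
    rw [hu]
    have : hammingDist y (x + (z + Pi.single δ μ)) ≤ 1 := by
      rwa [hammingDist_comm] at hd
    rw [hammingDist_comm, hammingDist_eq_hammingNorm] at this
    have e : y - (x + z + Pi.single δ μ) = -(x + (z + Pi.single δ μ)) + y := by abel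
    rw [e]; exact this
  -- we need r ∈ Rcomp δ with hammingNorm (y - (x + r + z)) ≤ 1
  suffices hsuff : ∃ r ∈ Rcomp δ, hammingNorm (y - (x + r + z)) ≤ 1 by
    obtain ⟨r, hr, hnr⟩ := hsuff
    refine ⟨(x + r) + z, ⟨x + r, (Rcomp δ).add_mem hx hr, rfl⟩, ?_⟩
    rw [hammingDist_comm, hammingDist_eq_hammingNorm]
    have : -y + (x + r + z) = -(y - (x + r + z)) := by abel
    rw [this]
    calc hammingNorm (-(y - (x + r + z))) ≤ hammingNorm (y - (x + r + z)) := by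
          have := hammingNorm_comp_le_hammingNorm (x := y - (x + r + z))
            (fun (_ : PA F m) (a : F) => -a) (fun i => neg_zero)
          exact this
      _ ≤ 1 := hnr
  by_cases hμ : μ = 0
  · refine ⟨0, (Rcomp δ).zero_mem, ?_⟩
    have : y - (x + 0 + z) = u := by rw [hu, hμ]; simp
    rw [this]; exact hun
  rcases norm_le_one_iff u hun with h0 | ⟨γ, hγ, hγ0⟩
  · -- u = 0 : y - (x+z) = single δ μ
    refine ⟨0, (Rcomp δ).zero_mem, norm_le_one_of _ δ fun α hα => ?_⟩
    have : y - (x + 0 + z) = u + Pi.single δ μ := by rw [hu]; abel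
    rw [this, h0]
    simp [Pi.single_eq_of_ne hα]
  by_cases hγδ : γ = δ
  · -- support of u is {δ}: take r = 0
    refine ⟨0, (Rcomp δ).zero_mem, norm_le_one_of _ δ fun α hα => ?_⟩
    have : y - (x + 0 + z) = u + Pi.single δ μ := by rw [hu]; abel
    rw [this]
    have hαγ : α ≠ γ := fun h => hα (h.trans hγδ)
    simp [hγ0 α hαγ, Pi.single_eq_of_ne hα]
  · -- γ ≠ δ, μ ≠ 0, u γ ≠ 0
    obtain ⟨c, hcR, β, hβδ, hβγ, hcδ, hcγ, hc0⟩ :=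
      weight3 δ γ (fun h => hγδ h.symm) (μ⁻¹ * u γ) (by
        exact mul_ne_zero (inv_ne_zero hμ) hγ)
    refine ⟨μ • c, (Rcomp δ).smul_mem μ hcR, norm_le_one_of _ β fun α hα => ?_⟩
    have hrw : y - (x + μ • c + z) = u + Pi.single δ μ - μ • c := by rw [hu]; abel
    rw [hrw]
    simp only [Pi.add_apply, Pi.sub_apply, Pi.smul_apply, smul_eq_mul]
    by_cases h1 : α = δ
    · subst h1
      rw [hγ0 α (Ne.symm hγδ), hcδ, Pi.single_eq_same]
      ring
    by_cases h2 : α = γ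
    · subst h2
      rw [hcγ, Pi.single_eq_of_ne h1, ← mul_assoc, mul_inv_cancel₀ hμ, one_mul]
      ring
    · rw [hγ0 α h2, hc0 α h1 h2 hα, Pi.single_eq_of_ne h1]
      ring

theorem stmt6 (δ : PA F m) (z : PA F m → F) (μ : F) :
    nbhd ((· + z) '' (Rcomp δ : Set (PA F m → F))) =
      nbhd ((· + (z + Pi.single δ μ)) '' (Rcomp δ : Set (PA F m → F))) := by
  apply Set.Subset.antisymm
  · have h := nbhd_incl δ (z + Pi.single δ μ) (-μ)
    have hz : z + Pi.single δ μ + Pi.single δ (-μ) = z := by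
      rw [add_assoc, ← Pi.single_add]
      simp
    rwa [hz] at h
  · exact nbhd_incl δ z μ
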